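/- For every prime p > 3, every non-trivial irreducible complex representation ρ of SL₂(𝔽_p) has dimension d_ρ ≥ (p−1)/2. -/

import Mathlib

open CategoryTheory

open Matrix Polynomial

namespace SL2Frob


variable (p : ℕ) [Fact p.Prime]

abbrev G := Matrix.SpecialLinearGroup (Fin 2) (ZMod p)

def U (b : ZMod p) : G p := ⟨!![1, b; 0, 1], by simp [Matrix.det_fin_two_of]⟩

def L (c : ZMod p) : G p := ⟨!![1, 0; c, 1], by simp [Matrix.det_fin_two_of]⟩

def W : G p := ⟨!![0, 1; -1, 0], by simp [Matrix.det_fin_two_of]⟩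

def D (a : (ZMod p)ˣ) : G p :=
  ⟨!![(a : ZMod p), 0; 0, ((a⁻¹ : (ZMod p)ˣ) : ZMod p)], by
    rw [Matrix.det_fin_two_of, ← Units.val_mul]; simp⟩

lemma U_mul (x y : ZMod p) : U p x * U p y = U p (x + y) := by
  apply Subtype.ext
  show (!![1, x; 0, 1] : Matrix (Fin 2) (Fin 2) (ZMod p)) * !![1, y; 0, 1] = _
  rw [Matrix.mul_fin_two]
  congr 1 <;> ring

lemma U_zero : U p 0 = 1 := by
  apply Subtype.ext
  show (!![1, (0 : ZMod p); 0, 1]) = (1 : Matrix (Fin 2) (Fin 2) (ZMod p))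
  rw [Matrix.one_fin_two]

lemma U_pow (n : ℕ) : (U p 1) ^ n = U p (n : ZMod p) := by
  induction n with
  | zero => rw [pow_zero, Nat.cast_zero, U_zero]
  | succ n ih =>
    rw [pow_succ, ih, U_mul]
    congr 1
    push_cast; ring

lemma W_conj (c : ZMod p) : W p * U p (-c) * (W p)⁻¹ = L p c := by
  rw [mul_inv_eq_iff_eq_mul]
  apply Subtype.ext
  show (!![0, 1; -1, 0] : Matrix (Fin 2) (Fin 2) (ZMod p)) * !![1, -c; 0, 1]
      = !![1, 0; c, 1] * !![0, 1; -1, 0]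
  rw [Matrix.mul_fin_two, Matrix.mul_fin_two]
  congr 1 <;> ring

lemma D_conj (a : (ZMod p)ˣ) (b : ZMod p) :
    D p a * U p b * (D p a)⁻¹ = U p ((a : ZMod p) ^ 2 * b) := by
  rw [mul_inv_eq_iff_eq_mul]
  apply Subtype.ext
  have h : (a : ZMod p) * ((a⁻¹ : (ZMod p)ˣ) : ZMod p) = 1 := by
    rw [← Units.val_mul]; simp
  show (!![(a : ZMod p), 0; 0, _] : Matrix (Fin 2) (Fin 2) (ZMod p)) * !![1, b; 0, 1]
      = !![1, (a : ZMod p) ^ 2 * b; 0, 1] * !![(a : ZMod p), 0; 0, _]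
  have h2 : (a : ZMod p) ^ 2 * b * ((a⁻¹ : (ZMod p)ˣ) : ZMod p) = (a : ZMod p) * b := by
    linear_combination (a : ZMod p) * b * h
  rw [Matrix.mul_fin_two, Matrix.mul_fin_two, h2]
  congr 1 <;> ring

lemma decomp (g : G p) (hc : (g : Matrix (Fin 2) (Fin 2) (ZMod p)) 1 0 ≠ 0) :
    g = U p ((g.1 0 0 - 1) / g.1 1 0) * L p (g.1 1 0) * U p ((g.1 1 1 - 1) / g.1 1 0) := by
  set a := g.1 0 0 with ha
  set b := g.1 0 1 with hb
  set c := g.1 1 0 with hcc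
  set d := g.1 1 1 with hd
  have hdet : a * d - b * c = 1 := by
    have := g.2; rwa [Matrix.det_fin_two] at this
  apply Subtype.ext
  show (g : Matrix (Fin 2) (Fin 2) (ZMod p))
      = (!![1, (a - 1) / c; 0, 1] * !![1, 0; c, 1]) * !![1, (d - 1) / c; 0, 1]
  rw [Matrix.mul_fin_two, Matrix.mul_fin_two]
  ext i j
  fin_cases i <;> fin_cases j <;>
    simp only [Matrix.cons_val_zero, Matrix.cons_val_one, Matrix.head_cons, Matrix.of_apply,
      Matrix.cons_val', Matrix.head_fin_const, Fin.zero_eta, Fin.mk_one, ← ha, ← hb, ← hcc, ← hd] <;>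
    field_simp <;> ring_nf <;>
    first
      | rfl
      | linear_combination hdet
      | linear_combination -hdet

lemma rho_trivial {M : Type*} [Monoid M] (φ : G p →* M) (h : φ (U p 1) = 1) (g : G p) :
    φ g = 1 := by
  have hU : ∀ b, φ (U p b) = 1 := fun b => by
    rw [← ZMod.natCast_rightInverse b, ← U_pow, map_pow, h, one_pow]
  have hL : ∀ c, φ (L p c) = 1 := fun c => by
    rw [← W_conj, _root_.map_mul, _root_.map_mul, hU, mul_one, ← _root_.map_mul, mul_inv_cancel, _root_.map_one]
  have key : ∀ g : G p, (g : Matrix (Fin 2) (Fin 2) (ZMod p)) 1 0 ≠ 0 → φ g = 1 := by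
    intro g hc
    rw [decomp p g hc, _root_.map_mul, _root_.map_mul, hU, hL, hU, mul_one, mul_one]
  by_cases hc : (g : Matrix (Fin 2) (Fin 2) (ZMod p)) 1 0 = 0
  · have hd : (g : Matrix (Fin 2) (Fin 2) (ZMod p)) 1 1 ≠ 0 := by
      intro hd0
      have := g.2
      rw [Matrix.det_fin_two, hc, hd0] at this
      simp at this
    have hentry : ((g * L p 1 : G p) : Matrix (Fin 2) (Fin 2) (ZMod p)) 1 0
        = (g : Matrix (Fin 2) (Fin 2) (ZMod p)) 1 1 := by
      rw [Matrix.SpecialLinearGroup.coe_mul, Matrix.mul_apply, Fin.sum_univ_two]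
      simp [L, hc]
    have h1 : φ (g * L p 1) = 1 := key _ (by rw [hentry]; exact hd)
    calc φ g = φ g * φ (L p 1) := by rw [hL, mul_one]
    _ = φ (g * L p 1) := (_root_.map_mul φ g _).symm
    _ = 1 := h1
  · exact key g hc

end SL2Frob


lemma SL2Frob.card_sq_range (p : ℕ) [Fact p.Prime] (hp : 3 < p) :
    2 * Nat.card ((powMonoidHom 2 : (ZMod p)ˣ →* (ZMod p)ˣ).range) = p - 1 := by
  have h2 : Fact (2 < p) := ⟨by omega⟩
  set f := (powMonoidHom 2 : (ZMod p)ˣ →* (ZMod p)ˣ) with hf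
  have hne : (-1 : (ZMod p)ˣ) ≠ 1 := by
    intro hx
    apply CharP.neg_one_ne_one (ZMod p) p
    have := congrArg (Units.val) hx
    rwa [Units.val_neg, Units.val_one] at this
  have hker : f.ker = Subgroup.zpowers (-1 : (ZMod p)ˣ) := by
    ext x
    rw [MonoidHom.mem_ker, hf, powMonoidHom_apply]
    constructor
    · intro hx
      have hx' : ((x : ZMod p) - 1) * ((x : ZMod p) + 1) = 0 := by
        have : (x : ZMod p) ^ 2 = 1 := by
          rw [← Units.val_pow_eq_pow_val, hx, Units.val_one]
        linear_combination this
      rcases mul_eq_zero.mp hx' with h | h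
      · have : x = 1 := Units.ext (by rw [Units.val_one]; linear_combination h)
        rw [this]; exact Subgroup.one_mem _
      · have : x = -1 := Units.ext (by
          rw [Units.val_neg, Units.val_one]; linear_combination h)
        rw [this]; exact Subgroup.mem_zpowers _
    · rintro ⟨k, rfl⟩
      have hsq : ((-1 : (ZMod p)ˣ)) ^ (((2 : ℕ) : ℤ)) = 1 := by
        rw [zpow_natCast]; exact neg_one_sq
      show ((-1 : (ZMod p)ˣ) ^ k) ^ (2 : ℕ) = 1
      rw [← zpow_natCast ((-1 : (ZMod p)ˣ) ^ k), ← _root_.zpow_mul, mul_comm, _root_.zpow_mul, hsq, _root_.one_zpow]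
  have hkcard : Nat.card f.ker = 2 := by
    rw [hker, Nat.card_zpowers, orderOf_eq_prime neg_one_sq hne]
  have hq := Subgroup.card_eq_card_quotient_mul_card_subgroup f.ker
  rw [Nat.card_congr (QuotientGroup.quotientKerEquivRange f).toEquiv, hkcard] at hq
  have hcard : Nat.card (ZMod p)ˣ = p - 1 := by
    rw [Nat.card_eq_fintype_card, ZMod.card_units]
  omega


lemma SL2Frob.exists_eigenvalue_ne_one {V : Type*} [AddCommGroup V] [Module ℂ V]
    [FiniteDimensional ℂ V] [Nontrivial V] (A : Module.End ℂ V) (p : ℕ) (hp : 0 < p)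
    (hAp : A ^ p = 1) (hA : A ≠ 1) :
    ∃ ζ : ℂ, ζ ^ p = 1 ∧ ζ ≠ 1 ∧ A.HasEigenvalue ζ := by
  have hint : IsIntegral ℂ A := Algebra.IsIntegral.isIntegral A
  set P := minpoly ℂ A with hP
  have haev : (Polynomial.aeval A) ((X : ℂ[X]) ^ p - C 1) = 0 := by
    rw [map_sub, map_pow, aeval_X, aeval_C]
    simp [hAp, Algebra.algebraMap_eq_smul_one]
  have hPdvd : P ∣ (X : ℂ[X]) ^ p - C 1 := minpoly.dvd ℂ A haev
  have hsf : Squarefree (X ^ p - C (1 : ℂ)) := by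
    refine (Polynomial.separable_X_pow_sub_C 1 ?_ one_ne_zero).squarefree
    exact_mod_cast Nat.cast_ne_zero.mpr hp.ne'
  have hmon : P.Monic := minpoly.monic hint
  have hdeg : 0 < P.natDegree := minpoly.natDegree_pos hint
  have hroot : ∃ z, P.IsRoot z ∧ z ≠ 1 := by
    by_contra hcon
    push_neg at hcon
    obtain ⟨z₀, hz₀⟩ := IsAlgClosed.exists_root P
      (Polynomial.natDegree_pos_iff_degree_pos.mp hdeg).ne'
    have hz₀1 : z₀ = 1 := hcon z₀ hz₀
    have h1 : (X - C 1) ∣ P := Polynomial.dvd_iff_isRoot.mpr (hz₀1 ▸ hz₀)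
    obtain ⟨Q, hQ⟩ := h1
    have hQne : Q ≠ 0 := by
      rintro rfl
      rw [mul_zero] at hQ
      exact hmon.ne_zero hQ
    by_cases hQdeg : Q.natDegree = 0
    · have hPdeg1 : P.natDegree = 1 := by
        rw [hQ, Polynomial.natDegree_mul (Polynomial.X_sub_C_ne_zero 1) hQne, hQdeg,
          Polynomial.natDegree_X_sub_C]
      have hPeq : P = X + C (P.coeff 0) := hmon.eq_X_add_C hPdeg1
      have hc0 : P.coeff 0 = -1 := by
        have hr1 : P.IsRoot 1 := hz₀1 ▸ hz₀
        rw [hPeq] at hr1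
        have h1e : (1 : ℂ) + P.coeff 0 = 0 := by
          simpa [Polynomial.IsRoot] using hr1
        linear_combination h1e
      apply hA
      have h0 : (aeval A) P = 0 := minpoly.aeval ℂ A
      rw [hPeq, hc0, map_add, aeval_X, aeval_C] at h0
      have h1' : A + (-1 : ℂ) • 1 = 0 := by
        rwa [Algebra.algebraMap_eq_smul_one] at h0
      have : A - 1 = 0 := by rw [← h1']; module
      rwa [sub_eq_zero] at this
    · obtain ⟨z₁, hz₁⟩ := IsAlgClosed.exists_root Q (by
        intro hdq
        exact hQdeg (Polynomial.natDegree_eq_zero_iff_degree_le_zero.mpr (le_of_eq hdq)))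
      have hz₁1 : z₁ = 1 := hcon z₁ (by
        rw [hQ]
        simp [Polynomial.IsRoot] at hz₁ ⊢
        right; exact hz₁)
      have h2 : (X - C 1) ∣ Q := Polynomial.dvd_iff_isRoot.mpr (hz₁1 ▸ hz₁)
      obtain ⟨R, hR⟩ := h2
      have hdd : (X - C (1 : ℂ)) * (X - C 1) ∣ (X : ℂ[X]) ^ p - C 1 :=
        dvd_trans ⟨R, by rw [hQ, hR]; ring⟩ hPdvd
      exact Polynomial.not_isUnit_X_sub_C 1 (hsf _ hdd)
  obtain ⟨z, hz, hzne⟩ := hroot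
  refine ⟨z, ?_, hzne, Module.End.hasEigenvalue_iff_isRoot.mpr hz⟩
  obtain ⟨R, hR⟩ := hPdvd
  have hev : (X ^ p - C (1 : ℂ)).eval z = 0 := by
    rw [hR, Polynomial.eval_mul]
    rw [show Polynomial.eval z P = 0 from hz, zero_mul]
  have := hev
  simp [Polynomial.eval_sub, Polynomial.eval_pow] at this
  rwa [sub_eq_zero] at this

/-- Frobenius: for `p > 3` prime, every non-trivial irreducible complex
representation of `SL₂(𝔽_p)` has dimension at least `(p-1)/2`. -/
theorem SL2_nontrivial_irrep_dim_lower_bound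
    (p : ℕ) [Fact p.Prime] (hp : 3 < p)
    (V : FDRep ℂ (Matrix.SpecialLinearGroup (Fin 2) (ZMod p))) [Simple V]
    (hnt : ∃ g, V.ρ g ≠ 1) :
    ((p : ℝ) - 1) / 2 ≤ (Module.finrank ℂ V : ℝ) := by
  obtain ⟨g₀, hg₀⟩ := hnt
  have hppos : 0 < p := by omega
  have hnz : NeZero p := ⟨hppos.ne'⟩
  have hVnt : Nontrivial V := by
    by_contra h
    rw [not_nontrivial_iff_subsingleton] at h
    exact hg₀ (Subsingleton.elim _ _)
  set A : Module.End ℂ V := V.ρ (SL2Frob.U p 1) with hAdef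
  have hAp : A ^ p = 1 := by
    rw [hAdef, ← _root_.map_pow, SL2Frob.U_pow, ZMod.natCast_self, SL2Frob.U_zero,
      _root_.map_one]
  have hAne : A ≠ 1 := fun h => hg₀ (SL2Frob.rho_trivial p V.ρ h g₀)
  obtain ⟨ζ, hζp, hζ1, hζeig⟩ := SL2Frob.exists_eigenvalue_ne_one A p hppos hAp hAne
  have hζ0 : IsUnit ζ := IsUnit.of_pow_eq_one hζp hppos.ne'
  have huv : (hζ0.unit : ℂ) = ζ := hζ0.unit_spec
  set u : ℂˣ := hζ0.unit with hu
  have hup : u ^ p = 1 := Units.ext (by rw [Units.val_pow_eq_pow_val, huv, hζp, Units.val_one])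
  have hord : orderOf u = p := by
    rcases (Nat.Prime.eq_one_or_self_of_dvd Fact.out _ (orderOf_dvd_of_pow_eq_one hup))
      with h | h
    · exfalso
      apply hζ1
      rw [← huv, orderOf_eq_one_iff.mp h, Units.val_one]
    · exact h
  have hinj : ∀ i j : ℕ, i < p → j < p → ζ ^ i = ζ ^ j → i = j := by
    intro i j hi hj hij
    have h' : u ^ i = u ^ j := Units.ext (by
      rw [Units.val_pow_eq_pow_val, Units.val_pow_eq_pow_val, huv, hij])
    exact pow_injOn_Iio_orderOf (by rwa [Set.mem_Iio, hord]) (by rwa [Set.mem_Iio, hord]) h'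
  set f := (powMonoidHom 2 : (ZMod p)ˣ →* (ZMod p)ˣ) with hf
  have hfin : Fintype f.range := Fintype.ofFinite _
  have hμinj : Function.Injective
      (fun s : f.range => ζ ^ (((s : (ZMod p)ˣ) : ZMod p)).val) := by
    intro s t hst
    have h' := hinj _ _ (ZMod.val_lt _) (ZMod.val_lt _) hst
    exact Subtype.ext (Units.ext (ZMod.val_injective p h'))
  have heig : ∀ s : f.range,
      A.HasEigenvalue (ζ ^ (((s : (ZMod p)ˣ) : ZMod p)).val) := by
    intro s
    obtain ⟨a, ha⟩ := s.2
    set m : ℕ := (((s : (ZMod p)ˣ) : ZMod p)).val with hm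
    have h1 : SL2Frob.D p a * SL2Frob.U p 1 * (SL2Frob.D p a)⁻¹ = (SL2Frob.U p 1) ^ m := by
      rw [SL2Frob.D_conj, SL2Frob.U_pow, hm, ZMod.natCast_rightInverse, mul_one]
      congr 1
      rw [← ha]
      rw [show f a = a ^ 2 from rfl, Units.val_pow_eq_pow_val]
    have hDU : SL2Frob.U p 1 = (SL2Frob.D p a)⁻¹ * ((SL2Frob.U p 1) ^ m * SL2Frob.D p a) := by
      rw [← h1]; group
    obtain ⟨v, hv⟩ := hζeig.exists_hasEigenvector
    set B := V.ρ (SL2Frob.D p a) with hB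
    set B' := V.ρ ((SL2Frob.D p a)⁻¹) with hB'
    have hBB' : ∀ x, B (B' x) = x := by
      intro x
      have h2 : B * B' = 1 := by
        rw [hB, hB', ← _root_.map_mul, mul_inv_cancel, _root_.map_one]
      calc B (B' x) = (B * B') x := rfl
      _ = x := by rw [h2]; rfl
    have hAeq : A = B' * (A ^ m * B) := by
      calc A = V.ρ ((SL2Frob.D p a)⁻¹ * ((SL2Frob.U p 1) ^ m * SL2Frob.D p a)) := by
            rw [hAdef, ← hDU]
      _ = B' * (A ^ m * B) := by rw [_root_.map_mul, _root_.map_mul, _root_.map_pow]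
    refine Module.End.hasEigenvalue_of_hasEigenvector (x := B' v)
      ⟨Module.End.mem_eigenspace_iff.mpr ?_, ?_⟩
    · calc A (B' v) = (B' * (A ^ m * B)) (B' v) := by rw [← hAeq]
      _ = B' ((A ^ m) (B (B' v))) := rfl
      _ = B' ((A ^ m) v) := by rw [hBB']
      _ = B' (ζ ^ m • v) := by rw [hv.pow_apply m]
      _ = ζ ^ m • B' v := B'.map_smul _ _
    · intro h0
      apply hv.right
      rw [← hBB' v, h0, map_zero]
  have hxs : ∀ s, A.HasEigenvector _ ((heig s).exists_hasEigenvector.choose) :=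
    fun s => (heig s).exists_hasEigenvector.choose_spec
  have hli := Module.End.eigenvectors_linearIndependent' A _ hμinj _ hxs
  have hcard : Fintype.card f.range ≤ Module.finrank ℂ V := hli.fintype_card_le_finrank
  have hc2 : 2 * Nat.card f.range = p - 1 := SL2Frob.card_sq_range p hp
  rw [Nat.card_eq_fintype_card] at hc2
  have heq : ((p : ℝ) - 1) / 2 = (Fintype.card f.range : ℝ) := by
    have h3 : ((p : ℝ)) - 1 = ((p - 1 : ℕ) : ℝ) := by
      rw [Nat.cast_sub (by omega)]; norm_num
    rw [h3, ← hc2]; push_cast; ring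
  rw [heq]
  exact_mod_cast hcard
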